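/- For every integer a ≥ 3, R_2(a; 2, a) < R_2(a; 3, a). -/

import Mathlib

/-- `S_2(a;b,c) = (1/a)·∑_{m=0}^{a−1} ⌊m·b/a⌋·⌊m·c/a⌋`. -/
noncomputable def S2 (a b c : ℕ) : ℝ :=
  (1 / (a : ℝ)) * ∑ m ∈ Finset.range a, ((m * b / a : ℕ) : ℝ) * ((m * c / a : ℕ) : ℝ)

/-- `M_2(a;b) = (1/a)·∑_{m=0}^{a−1} ⌊m·b/a⌋²`. -/
noncomputable def M2 (a b : ℕ) : ℝ :=
  (1 / (a : ℝ)) * ∑ m ∈ Finset.range a, ((m * b / a : ℕ) : ℝ) ^ 2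

/-- `R_2(a;b,c) = S_2(a;b,c)/√(M_2(a;b)·M_2(a;c))`. -/
noncomputable def R2 (a b c : ℕ) : ℝ := S2 a b c / Real.sqrt (M2 a b * M2 a c)

private lemma gaussZ (n : ℕ) : 2 * ((∑ i ∈ Finset.range n, i : ℕ) : ℤ) = n * (n - 1) := by
  induction n with
  | zero => simp
  | succ m ih =>
    rw [Finset.sum_range_succ]
    push_cast at ih ⊢
    ring_nf at ih ⊢
    linarith

set_option maxHeartbeats 1000000 in
open Finset in
private lemma key_ineq (a : ℕ) (ha : 3 ≤ a) :
    (∑ m ∈ range a, (m*2/a)*m)^2 * (∑ m ∈ range a, (m*3/a)^2)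
      < (∑ m ∈ range a, (m*3/a)*m)^2 * (∑ m ∈ range a, (m*2/a)^2) := by
  have ha0 : 0 < a := by omega
  have h2 : ∀ m ∈ range a, m*2/a = if a ≤ m*2 then 1 else 0 := by
    intro m hm; rw [mem_range] at hm
    split
    · exact Nat.div_eq_of_lt_le (by omega) (by omega)
    · exact Nat.div_eq_of_lt (by omega)
  have h3 : ∀ m ∈ range a, m*3/a = (if a ≤ m*3 then 1 else 0) + (if 2*a ≤ m*3 then 1 else 0) := by
    intro m hm; rw [mem_range] at hm
    split_ifs with u v v
    · exact Nat.div_eq_of_lt_le (by omega) (by omega)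
    · exact Nat.div_eq_of_lt_le (by omega) (by omega)
    · omega
    · exact Nat.div_eq_of_lt (by omega)
  have hfilt2 : filter (fun m => a ≤ m*2) (range a) = Ico ((a+1)/2) a := by
    ext m; simp only [mem_filter, mem_range, mem_Ico]; omega
  have hfilt3 : filter (fun m => a ≤ m*3) (range a) = Ico ((a+2)/3) a := by
    ext m; simp only [mem_filter, mem_range, mem_Ico]; omega
  have hfilt3' : filter (fun m => 2*a ≤ m*3) (range a) = Ico ((2*a+2)/3) a := by
    ext m; simp only [mem_filter, mem_range, mem_Ico]; omega
  have hA : ∑ m ∈ range a, (m*2/a)*m = ∑ m ∈ Ico ((a+1)/2) a, m := by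
    rw [← hfilt2, Finset.sum_filter]
    refine Finset.sum_congr rfl fun m hm => ?_
    rw [h2 m hm]; split <;> simp
  have hB : ∑ m ∈ range a, (m*2/a)^2 = a - (a+1)/2 := by
    rw [← Nat.card_Ico, ← hfilt2, Finset.card_filter]
    refine Finset.sum_congr rfl fun m hm => ?_
    rw [h2 m hm]; split <;> norm_num
  have hC : ∑ m ∈ range a, (m*3/a)*m
      = (∑ m ∈ Ico ((a+2)/3) a, m) + (∑ m ∈ Ico ((2*a+2)/3) a, m) := by
    rw [← hfilt3, ← hfilt3', Finset.sum_filter, Finset.sum_filter, ← Finset.sum_add_distrib]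
    refine Finset.sum_congr rfl fun m hm => ?_
    rw [h3 m hm]; split_ifs <;> omega
  have hD : ∑ m ∈ range a, (m*3/a)^2 = (a - (a+2)/3) + 3*(a - (2*a+2)/3) := by
    have e : ∀ m ∈ range a,
        (m*3/a)^2 = (if a ≤ m*3 then (1:ℕ) else 0) + 3*(if 2*a ≤ m*3 then 1 else 0) := by
      intro m hm; rw [h3 m hm]; split_ifs <;> omega
    rw [Finset.sum_congr rfl e, Finset.sum_add_distrib, ← Finset.mul_sum,
        ← Finset.card_filter, ← Finset.card_filter, hfilt3, hfilt3', Nat.card_Ico, Nat.card_Ico]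
  rw [hA, hB, hC, hD]
  have hsplit : ∀ c, c ≤ a → (∑ i ∈ range c, i) + (∑ i ∈ Ico c a, i) = ∑ i ∈ range a, i := by
    intro c hc
    rw [Finset.range_eq_Ico, Finset.range_eq_Ico]
    exact Finset.sum_Ico_consecutive (fun i : ℕ => i) (Nat.zero_le c) hc
  have hmod : a % 6 = 0 ∨ a % 6 = 1 ∨ a % 6 = 2 ∨ a % 6 = 3 ∨ a % 6 = 4 ∨ a % 6 = 5 := by omega
  rcases hmod with h|h|h|h|h|h
  · -- a ≡ 0 (mod 6)
    obtain ⟨k, hk, rfl⟩ : ∃ k, 1 ≤ k ∧ a = 6*k := ⟨a/6, by omega, by omega⟩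
    rw [show (6*k+1)/2 = 3*k from by omega, show (6*k+2)/3 = 2*k from by omega,
        show (2*(6*k)+2)/3 = 4*k from by omega,
        show (6*k) - (2*k) + 3*((6*k) - (4*k)) = 10*k from by omega,
        show (6*k) - (3*k) = 3*k from by omega]
    have e2 := hsplit (3*k) (by omega)
    have e3 := hsplit (2*k) (by omega)
    have e4 := hsplit (4*k) (by omega)
    zify at e2 e3 e4
    have g0 := gaussZ (6*k)
    have g2 := gaussZ (3*k); have g3 := gaussZ (2*k); have g4 := gaussZ (4*k)
    push_cast at g0 g2 g3 g4
    have hA2 : 2*(∑ x ∈ Ico (3*k) (6*k), (x:ℤ)) = 27*k^2 - 3*k := by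
      linear_combination g0 - g2 + 2*e2
    have hC2 : 2*((∑ x ∈ Ico (2*k) (6*k), (x:ℤ)) + (∑ x ∈ Ico (4*k) (6*k), (x:ℤ)))
        = 52*k^2 - 6*k := by
      linear_combination 2*g0 - g3 - g4 + 2*e3 + 2*e4
    zify
    push_cast
    have hkz : (1:ℤ) ≤ (k:ℤ) := by exact_mod_cast hk
    have HK : (27*k^2 - 3*k : ℤ)^2*((10*k:ℤ)) < (52*k^2 - 6*k : ℤ)^2*((3*k:ℤ)) := by
      nlinarith [sq_nonneg ((k:ℤ)-1), pow_pos (show (0:ℤ) < k by omega) 3,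
        pow_pos (show (0:ℤ) < k by omega) 4, pow_pos (show (0:ℤ) < k by omega) 5]
    have HL : (2*(∑ x ∈ Ico (3*k) (6*k), (x:ℤ)))^2*((10*k:ℤ))
        = (27*k^2 - 3*k : ℤ)^2*((10*k:ℤ)) := by rw [hA2]
    have HR : (2*((∑ x ∈ Ico (2*k) (6*k), (x:ℤ)) + (∑ x ∈ Ico (4*k) (6*k), (x:ℤ))))^2*((3*k:ℤ))
        = (52*k^2 - 6*k : ℤ)^2*((3*k:ℤ)) := by rw [hC2]
    linarith [HL, HR, HK]
  · -- a ≡ 1 (mod 6)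
    obtain ⟨k, hk, rfl⟩ : ∃ k, 1 ≤ k ∧ a = 6*k+1 := ⟨a/6, by omega, by omega⟩
    rw [show (6*k+1+1)/2 = 3*k+1 from by omega, show (6*k+1+2)/3 = 2*k+1 from by omega,
        show (2*(6*k+1)+2)/3 = 4*k+1 from by omega,
        show (6*k+1) - (2*k+1) + 3*((6*k+1) - (4*k+1)) = 10*k from by omega,
        show (6*k+1) - (3*k+1) = 3*k from by omega]
    have e2 := hsplit (3*k+1) (by omega)
    have e3 := hsplit (2*k+1) (by omega)
    have e4 := hsplit (4*k+1) (by omega)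
    zify at e2 e3 e4
    have g0 := gaussZ (6*k+1)
    have g2 := gaussZ (3*k+1); have g3 := gaussZ (2*k+1); have g4 := gaussZ (4*k+1)
    push_cast at g0 g2 g3 g4
    have hA2 : 2*(∑ x ∈ Ico (3*k+1) (6*k+1), (x:ℤ)) = 27*k^2 + 3*k := by
      linear_combination g0 - g2 + 2*e2
    have hC2 : 2*((∑ x ∈ Ico (2*k+1) (6*k+1), (x:ℤ)) + (∑ x ∈ Ico (4*k+1) (6*k+1), (x:ℤ)))
        = 52*k^2 + 6*k := by
      linear_combination 2*g0 - g3 - g4 + 2*e3 + 2*e4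
    zify
    push_cast
    have hkz : (1:ℤ) ≤ (k:ℤ) := by exact_mod_cast hk
    have HK : (27*k^2 + 3*k : ℤ)^2*((10*k:ℤ)) < (52*k^2 + 6*k : ℤ)^2*((3*k:ℤ)) := by
      nlinarith [sq_nonneg ((k:ℤ)-1), pow_pos (show (0:ℤ) < k by omega) 3,
        pow_pos (show (0:ℤ) < k by omega) 4, pow_pos (show (0:ℤ) < k by omega) 5]
    have HL : (2*(∑ x ∈ Ico (3*k+1) (6*k+1), (x:ℤ)))^2*((10*k:ℤ))
        = (27*k^2 + 3*k : ℤ)^2*((10*k:ℤ)) := by rw [hA2]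
    have HR : (2*((∑ x ∈ Ico (2*k+1) (6*k+1), (x:ℤ)) + (∑ x ∈ Ico (4*k+1) (6*k+1), (x:ℤ))))^2*((3*k:ℤ))
        = (52*k^2 + 6*k : ℤ)^2*((3*k:ℤ)) := by rw [hC2]
    linarith [HL, HR, HK]
  · -- a ≡ 2 (mod 6)
    obtain ⟨k, hk, rfl⟩ : ∃ k, 1 ≤ k ∧ a = 6*k+2 := ⟨a/6, by omega, by omega⟩
    rw [show (6*k+2+1)/2 = 3*k+1 from by omega, show (6*k+2+2)/3 = 2*k+1 from by omega,
        show (2*(6*k+2)+2)/3 = 4*k+2 from by omega,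
        show (6*k+2) - (2*k+1) + 3*((6*k+2) - (4*k+2)) = 10*k+1 from by omega,
        show (6*k+2) - (3*k+1) = 3*k+1 from by omega]
    have e2 := hsplit (3*k+1) (by omega)
    have e3 := hsplit (2*k+1) (by omega)
    have e4 := hsplit (4*k+2) (by omega)
    zify at e2 e3 e4
    have g0 := gaussZ (6*k+2)
    have g2 := gaussZ (3*k+1); have g3 := gaussZ (2*k+1); have g4 := gaussZ (4*k+2)
    push_cast at g0 g2 g3 g4
    have hA2 : 2*(∑ x ∈ Ico (3*k+1) (6*k+2), (x:ℤ)) = 27*k^2 + 15*k + 2 := by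
      linear_combination g0 - g2 + 2*e2
    have hC2 : 2*((∑ x ∈ Ico (2*k+1) (6*k+2), (x:ℤ)) + (∑ x ∈ Ico (4*k+2) (6*k+2), (x:ℤ)))
        = 52*k^2 + 22*k + 2 := by
      linear_combination 2*g0 - g3 - g4 + 2*e3 + 2*e4
    zify
    push_cast
    have hkz : (1:ℤ) ≤ (k:ℤ) := by exact_mod_cast hk
    have HK : (27*k^2 + 15*k + 2 : ℤ)^2*((10*k+1:ℤ)) < (52*k^2 + 22*k + 2 : ℤ)^2*((3*k+1:ℤ)) := by
      nlinarith [sq_nonneg ((k:ℤ)-1), pow_pos (show (0:ℤ) < k by omega) 3,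
        pow_pos (show (0:ℤ) < k by omega) 4, pow_pos (show (0:ℤ) < k by omega) 5]
    have HL : (2*(∑ x ∈ Ico (3*k+1) (6*k+2), (x:ℤ)))^2*((10*k+1:ℤ))
        = (27*k^2 + 15*k + 2 : ℤ)^2*((10*k+1:ℤ)) := by rw [hA2]
    have HR : (2*((∑ x ∈ Ico (2*k+1) (6*k+2), (x:ℤ)) + (∑ x ∈ Ico (4*k+2) (6*k+2), (x:ℤ))))^2*((3*k+1:ℤ))
        = (52*k^2 + 22*k + 2 : ℤ)^2*((3*k+1:ℤ)) := by rw [hC2]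
    linarith [HL, HR, HK]
  · -- a ≡ 3 (mod 6)
    obtain ⟨k, rfl⟩ : ∃ k, a = 6*k+3 := ⟨a/6, by omega⟩
    rw [show (6*k+3+1)/2 = 3*k+2 from by omega, show (6*k+3+2)/3 = 2*k+1 from by omega,
        show (2*(6*k+3)+2)/3 = 4*k+2 from by omega,
        show (6*k+3) - (2*k+1) + 3*((6*k+3) - (4*k+2)) = 10*k+5 from by omega,
        show (6*k+3) - (3*k+2) = 3*k+1 from by omega]
    have e2 := hsplit (3*k+2) (by omega)
    have e3 := hsplit (2*k+1) (by omega)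
    have e4 := hsplit (4*k+2) (by omega)
    zify at e2 e3 e4
    have g0 := gaussZ (6*k+3)
    have g2 := gaussZ (3*k+2); have g3 := gaussZ (2*k+1); have g4 := gaussZ (4*k+2)
    push_cast at g0 g2 g3 g4
    have hA2 : 2*(∑ x ∈ Ico (3*k+2) (6*k+3), (x:ℤ)) = 27*k^2 + 21*k + 4 := by
      linear_combination g0 - g2 + 2*e2
    have hC2 : 2*((∑ x ∈ Ico (2*k+1) (6*k+3), (x:ℤ)) + (∑ x ∈ Ico (4*k+2) (6*k+3), (x:ℤ)))
        = 52*k^2 + 46*k + 10 := by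
      linear_combination 2*g0 - g3 - g4 + 2*e3 + 2*e4
    zify
    push_cast
    have hkz : (0:ℤ) ≤ (k:ℤ) := Int.ofNat_nonneg k
    have HK : (27*k^2 + 21*k + 4 : ℤ)^2*((10*k+5:ℤ)) < (52*k^2 + 46*k + 10 : ℤ)^2*((3*k+1:ℤ)) := by
      nlinarith [hkz, sq_nonneg (k:ℤ), pow_nonneg hkz 3, pow_nonneg hkz 4, pow_nonneg hkz 5,
        mul_nonneg (mul_nonneg hkz hkz) hkz]
    have HL : (2*(∑ x ∈ Ico (3*k+2) (6*k+3), (x:ℤ)))^2*((10*k+5:ℤ))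
        = (27*k^2 + 21*k + 4 : ℤ)^2*((10*k+5:ℤ)) := by rw [hA2]
    have HR : (2*((∑ x ∈ Ico (2*k+1) (6*k+3), (x:ℤ)) + (∑ x ∈ Ico (4*k+2) (6*k+3), (x:ℤ))))^2*((3*k+1:ℤ))
        = (52*k^2 + 46*k + 10 : ℤ)^2*((3*k+1:ℤ)) := by rw [hC2]
    linarith [HL, HR, HK]
  · -- a ≡ 4 (mod 6)
    obtain ⟨k, rfl⟩ : ∃ k, a = 6*k+4 := ⟨a/6, by omega⟩
    rw [show (6*k+4+1)/2 = 3*k+2 from by omega, show (6*k+4+2)/3 = 2*k+2 from by omega,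
        show (2*(6*k+4)+2)/3 = 4*k+3 from by omega,
        show (6*k+4) - (2*k+2) + 3*((6*k+4) - (4*k+3)) = 10*k+5 from by omega,
        show (6*k+4) - (3*k+2) = 3*k+2 from by omega]
    have e2 := hsplit (3*k+2) (by omega)
    have e3 := hsplit (2*k+2) (by omega)
    have e4 := hsplit (4*k+3) (by omega)
    zify at e2 e3 e4
    have g0 := gaussZ (6*k+4)
    have g2 := gaussZ (3*k+2); have g3 := gaussZ (2*k+2); have g4 := gaussZ (4*k+3)
    push_cast at g0 g2 g3 g4
    have hA2 : 2*(∑ x ∈ Ico (3*k+2) (6*k+4), (x:ℤ)) = 27*k^2 + 33*k + 10 := by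
      linear_combination g0 - g2 + 2*e2
    have hC2 : 2*((∑ x ∈ Ico (2*k+2) (6*k+4), (x:ℤ)) + (∑ x ∈ Ico (4*k+3) (6*k+4), (x:ℤ)))
        = 52*k^2 + 58*k + 16 := by
      linear_combination 2*g0 - g3 - g4 + 2*e3 + 2*e4
    zify
    push_cast
    have hkz : (0:ℤ) ≤ (k:ℤ) := Int.ofNat_nonneg k
    have HK : (27*k^2 + 33*k + 10 : ℤ)^2*((10*k+5:ℤ)) < (52*k^2 + 58*k + 16 : ℤ)^2*((3*k+2:ℤ)) := by
      nlinarith [hkz, sq_nonneg (k:ℤ), pow_nonneg hkz 3, pow_nonneg hkz 4, pow_nonneg hkz 5,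
        mul_nonneg (mul_nonneg hkz hkz) hkz]
    have HL : (2*(∑ x ∈ Ico (3*k+2) (6*k+4), (x:ℤ)))^2*((10*k+5:ℤ))
        = (27*k^2 + 33*k + 10 : ℤ)^2*((10*k+5:ℤ)) := by rw [hA2]
    have HR : (2*((∑ x ∈ Ico (2*k+2) (6*k+4), (x:ℤ)) + (∑ x ∈ Ico (4*k+3) (6*k+4), (x:ℤ))))^2*((3*k+2:ℤ))
        = (52*k^2 + 58*k + 16 : ℤ)^2*((3*k+2:ℤ)) := by rw [hC2]
    linarith [HL, HR, HK]
  · -- a ≡ 5 (mod 6)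
    obtain ⟨k, rfl⟩ : ∃ k, a = 6*k+5 := ⟨a/6, by omega⟩
    rw [show (6*k+5+1)/2 = 3*k+3 from by omega, show (6*k+5+2)/3 = 2*k+2 from by omega,
        show (2*(6*k+5)+2)/3 = 4*k+4 from by omega,
        show (6*k+5) - (2*k+2) + 3*((6*k+5) - (4*k+4)) = 10*k+6 from by omega,
        show (6*k+5) - (3*k+3) = 3*k+2 from by omega]
    have e2 := hsplit (3*k+3) (by omega)
    have e3 := hsplit (2*k+2) (by omega)
    have e4 := hsplit (4*k+4) (by omega)
    zify at e2 e3 e4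
    have g0 := gaussZ (6*k+5)
    have g2 := gaussZ (3*k+3); have g3 := gaussZ (2*k+2); have g4 := gaussZ (4*k+4)
    push_cast at g0 g2 g3 g4
    have hA2 : 2*(∑ x ∈ Ico (3*k+3) (6*k+5), (x:ℤ)) = 27*k^2 + 39*k + 14 := by
      linear_combination g0 - g2 + 2*e2
    have hC2 : 2*((∑ x ∈ Ico (2*k+2) (6*k+5), (x:ℤ)) + (∑ x ∈ Ico (4*k+4) (6*k+5), (x:ℤ)))
        = 52*k^2 + 74*k + 26 := by
      linear_combination 2*g0 - g3 - g4 + 2*e3 + 2*e4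
    zify
    push_cast
    have hkz : (0:ℤ) ≤ (k:ℤ) := Int.ofNat_nonneg k
    have HK : (27*k^2 + 39*k + 14 : ℤ)^2*((10*k+6:ℤ)) < (52*k^2 + 74*k + 26 : ℤ)^2*((3*k+2:ℤ)) := by
      nlinarith [hkz, sq_nonneg (k:ℤ), pow_nonneg hkz 3, pow_nonneg hkz 4, pow_nonneg hkz 5,
        mul_nonneg (mul_nonneg hkz hkz) hkz]
    have HL : (2*(∑ x ∈ Ico (3*k+3) (6*k+5), (x:ℤ)))^2*((10*k+6:ℤ))
        = (27*k^2 + 39*k + 14 : ℤ)^2*((10*k+6:ℤ)) := by rw [hA2]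
    have HR : (2*((∑ x ∈ Ico (2*k+2) (6*k+5), (x:ℤ)) + (∑ x ∈ Ico (4*k+4) (6*k+5), (x:ℤ))))^2*((3*k+2:ℤ))
        = (52*k^2 + 74*k + 26 : ℤ)^2*((3*k+2:ℤ)) := by rw [hC2]
    linarith [HL, HR, HK]

open Finset in
theorem R2_two_lt_three (a : ℕ) (ha : 3 ≤ a) : R2 a 2 a < R2 a 3 a := by
  have key := key_ineq a ha
  have ha0 : 0 < a := by omega
  have haR : (0:ℝ) < (a:ℝ) := by exact_mod_cast ha0
  have hma : ∀ m : ℕ, m * a / a = m := fun m => Nat.mul_div_cancel m ha0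
  have cast1 : ∀ (b : ℕ), ∑ m ∈ Finset.range a, ((m*b/a : ℕ):ℝ) * ((m*a/a : ℕ):ℝ)
      = ((∑ m ∈ Finset.range a, (m*b/a)*m : ℕ):ℝ) := by
    intro b; push_cast
    exact Finset.sum_congr rfl fun m _ => by rw [hma m]
  have cast2 : ∀ (b : ℕ), ∑ m ∈ Finset.range a, ((m*b/a : ℕ):ℝ)^2
      = ((∑ m ∈ Finset.range a, (m*b/a)^2 : ℕ):ℝ) := by
    intro b; push_cast; rfl
  have castE : ∑ m ∈ Finset.range a, ((m*a/a : ℕ):ℝ)^2 = ((∑ m ∈ Finset.range a, m^2 : ℕ):ℝ) := by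
    push_cast; exact Finset.sum_congr rfl fun m _ => by rw [hma m]
  -- positivity
  have hBpos : 0 < ∑ m ∈ range a, (m*2/a)^2 :=
    Finset.sum_pos' (fun i _ => Nat.zero_le _)
      ⟨a-1, Finset.mem_range.2 (by omega), pow_pos (Nat.div_pos (by omega) ha0) 2⟩
  have hDpos : 0 < ∑ m ∈ range a, (m*3/a)^2 :=
    Finset.sum_pos' (fun i _ => Nat.zero_le _)
      ⟨a-1, Finset.mem_range.2 (by omega), pow_pos (Nat.div_pos (by omega) ha0) 2⟩
  have hEpos : 0 < ∑ m ∈ range a, m^2 :=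
    Finset.sum_pos' (fun i _ => Nat.zero_le _)
      ⟨a-1, Finset.mem_range.2 (by omega), pow_pos (by omega) 2⟩
  have hBr : (0:ℝ) < ((∑ m ∈ range a, (m*2/a)^2 : ℕ):ℝ) := by exact_mod_cast hBpos
  have hDr : (0:ℝ) < ((∑ m ∈ range a, (m*3/a)^2 : ℕ):ℝ) := by exact_mod_cast hDpos
  have hEr : (0:ℝ) < ((∑ m ∈ range a, m^2 : ℕ):ℝ) := by exact_mod_cast hEpos
  have hform : ∀ (A B E : ℕ), (0:ℝ) < (B:ℝ)*E →
      (1/(a:ℝ) * A) / Real.sqrt ((1/(a:ℝ) * B) * (1/(a:ℝ) * E)) = (A:ℝ)/Real.sqrt ((B:ℝ)*E) := by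
    intro A B E hBE
    rw [show (1/(a:ℝ) * B) * (1/(a:ℝ) * E) = ((B:ℝ)*E) / (a:ℝ)^2 by ring,
        Real.sqrt_div (by positivity), Real.sqrt_sq haR.le]
    have hs : Real.sqrt ((B:ℝ)*E) ≠ 0 := ne_of_gt (Real.sqrt_pos.2 hBE)
    field_simp
  simp only [R2, S2, M2]
  rw [cast1 2, cast1 3, cast2 2, cast2 3, castE,
      hform _ _ _ (by positivity), hform _ _ _ (by positivity)]
  rw [div_lt_div_iff₀ (Real.sqrt_pos.2 (by positivity)) (Real.sqrt_pos.2 (by positivity))]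
  refine lt_of_pow_lt_pow_left₀ 2 (by positivity) ?_
  rw [mul_pow, mul_pow, Real.sq_sqrt (by positivity), Real.sq_sqrt (by positivity)]
  have keyR : ((∑ m ∈ range a, (m*2/a)*m : ℕ):ℝ)^2 * ((∑ m ∈ range a, (m*3/a)^2 : ℕ):ℝ)
      < ((∑ m ∈ range a, (m*3/a)*m : ℕ):ℝ)^2 * ((∑ m ∈ range a, (m*2/a)^2 : ℕ):ℝ) := by
    exact_mod_cast key
  nlinarith [mul_lt_mul_of_pos_right keyR hEr]
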